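/- Let k be a field, n ≥ 2, R = k[X_1,...,X_n]/(X_1^2,...,X_n^2) with images x_1,...,x_n, I = (x_i x_j : 1 ≤ i < j ≤ n), and M = R/I. Then M is a non-free R-module, type(M) = n, μ(Hom_R(M,R)) = n, type(R) = 1, and hence type(M) = μ(Hom_R(M,R)) · type(R). -/

import Mathlib

set_option synthInstance.maxHeartbeats 2000000
set_option maxHeartbeats 4000000

open TensorProduct

universe u

/-- The polynomial ring `k[X_1, …, X_n]`. -/
abbrev Poly9 (k : Type u) [Field k] (n : ℕ) : Type u := MvPolynomial (Fin n) k

/-- The ring `R = k[X_1, …, X_n] / (X_1^2, …, X_n^2)`. -/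
abbrev Ring9 (k : Type u) [Field k] (n : ℕ) : Type u :=
  Poly9 k n ⧸ Ideal.span (Set.range fun i : Fin n => (MvPolynomial.X i : Poly9 k n) ^ 2)

/-- The image `x i` of `X i` in `R`. -/
noncomputable def x9 (k : Type u) [Field k] (n : ℕ) (i : Fin n) : Ring9 k n :=
  Ideal.Quotient.mk _ (MvPolynomial.X i)

/-- The ideal `I = (x_i x_j : i < j)` of `R`. -/
noncomputable def I9 (k : Type u) [Field k] (n : ℕ) : Ideal (Ring9 k n) :=
  Ideal.span {p : Ring9 k n | ∃ i j : Fin n, i < j ∧ p = x9 k n i * x9 k n j}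

/-- The module `M = R / I`. -/
abbrev M9 (k : Type u) [Field k] (n : ℕ) : Type u := Ring9 k n ⧸ I9 k n

/-- The residue field `K = R / (x_1, …, x_n)` (isomorphic to `k`). -/
abbrev K9 (k : Type u) [Field k] (n : ℕ) : Type u :=
  Ring9 k n ⧸ Ideal.span (Set.range (x9 k n))

namespace Stmt9

open MvPolynomial Finset

variable (k : Type u) [Field k] (n : ℕ)

/-- squarefree exponent vector of a set -/
noncomputable def md (S : Finset (Fin n)) : Fin n →₀ ℕ :=
  Finsupp.indicator S (fun _ _ => 1)

variable {n}

lemma md_apply (S : Finset (Fin n)) (i : Fin n) :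
    md n S i = if i ∈ S then 1 else 0 := by
  simp [md, Finsupp.indicator_apply]

lemma md_injective : Function.Injective (md n) := by
  intro S T h
  ext i
  have := DFunLike.congr_fun h i
  rw [md_apply, md_apply] at this
  by_cases hS : i ∈ S <;> by_cases hT : i ∈ T <;> simp_all

lemma md_not_bad (S : Finset (Fin n)) (i : Fin n) : ¬ 2 ≤ md n S i := by
  rw [md_apply]; split <;> omega

lemma md_add_disjoint {S T : Finset (Fin n)} (h : Disjoint S T) :
    md n S + md n T = md n (S ∪ T) := by
  ext i
  rw [Finsupp.add_apply, md_apply, md_apply, md_apply]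
  by_cases hS : i ∈ S
  · have hT : i ∉ T := Finset.disjoint_left.mp h hS
    simp [hS, hT]
  · by_cases hT : i ∈ T <;> simp [hS, hT]

lemma md_empty : md n (∅ : Finset (Fin n)) = 0 := by
  ext i; rw [md_apply]; simp

lemma md_singleton (i : Fin n) : md n {i} = Finsupp.single i 1 := by
  ext j; rw [md_apply, Finsupp.single_apply]
  by_cases h : j = i
  · subst h; simp
  · simp [h, Ne.symm h]

variable (n) in
/-- The defining ideal of `Ring9`. -/
noncomputable abbrev Q9 : Ideal (Poly9 k n) :=
  Ideal.span (Set.range fun i : Fin n => (MvPolynomial.X i : Poly9 k n) ^ 2)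

lemma mem_Q9_iff (p : Poly9 k n) :
    p ∈ Q9 k n ↔ ∀ d ∈ p.support, ∃ i, 2 ≤ d i := by
  constructor
  · intro hp
    refine Submodule.span_induction ?_ ?_ ?_ ?_ hp
    · rintro q ⟨i, rfl⟩ d hd
      simp only [MvPolynomial.X_pow_eq_monomial] at hd
      have := MvPolynomial.support_monomial_subset hd
      rw [Finset.mem_singleton] at this
      subst this
      exact ⟨i, by simp⟩
    · simp
    · intro a b _ _ ha hb d hd
      rcases Finset.mem_union.mp (Finsupp.support_add hd) with h | h
      · exact ha d h
      · exact hb d h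
    · intro r q _ hq d hd
      have := MvPolynomial.support_mul r q hd
      rw [Finset.mem_add] at this
      obtain ⟨a, ha, b, hb, rfl⟩ := this
      obtain ⟨i, hi⟩ := hq b hb
      exact ⟨i, le_trans hi (by simp)⟩
  · intro h
    rw [← MvPolynomial.support_sum_monomial_coeff p]
    refine Ideal.sum_mem _ ?_
    intro d hd
    obtain ⟨i, hi⟩ := h d hd
    have key : (MvPolynomial.monomial d) (MvPolynomial.coeff d p)
        = (MvPolynomial.monomial (d - Finsupp.single i 2)) (MvPolynomial.coeff d p)
          * (MvPolynomial.X i) ^ 2 := by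
      have hexp : (d - Finsupp.single i 2) + Finsupp.single i 2 = d := by
        ext j
        rw [Finsupp.add_apply, Finsupp.tsub_apply]
        rcases eq_or_ne j i with rfl | hji
        · rw [Finsupp.single_eq_same]
          omega
        · simp [Finsupp.single_apply, Ne.symm hji]
      rw [MvPolynomial.X_pow_eq_monomial, MvPolynomial.monomial_mul, mul_one, hexp]
    rw [key]
    exact Ideal.mul_mem_left _ _ (Ideal.subset_span ⟨i, rfl⟩)

variable (n) in
/-- the squarefree monomial images, the standard basis vectors of `Ring9`. -/
noncomputable def bf (S : Finset (Fin n)) : Ring9 k n :=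
  Ideal.Quotient.mk _ (MvPolynomial.monomial (md n S) (1 : k))

lemma mk_smul (c : k) (p : Poly9 k n) :
    Ideal.Quotient.mk (Q9 k n) (c • p) = c • Ideal.Quotient.mk (Q9 k n) p :=
  map_smul (Ideal.Quotient.mkₐ k (Q9 k n)) c p

lemma smul_bf (c : k) (S : Finset (Fin n)) :
    c • bf k n S = Ideal.Quotient.mk _ (MvPolynomial.monomial (md n S) c) := by
  rw [bf, ← mk_smul, MvPolynomial.smul_monomial, smul_eq_mul, mul_one]

lemma bf_linearIndependent : LinearIndependent k (bf k n) := by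
  rw [Fintype.linearIndependent_iff]
  intro g hg T
  have hsum : ∑ S : Finset (Fin n), g S • bf k n S
      = Ideal.Quotient.mk _ (∑ S : Finset (Fin n), MvPolynomial.monomial (md n S) (g S)) := by
    rw [map_sum]
    exact Finset.sum_congr rfl fun S _ => smul_bf k (g S) S
  rw [hsum, Ideal.Quotient.eq_zero_iff_mem, mem_Q9_iff] at hg
  by_contra hT
  have hcoeff : MvPolynomial.coeff (md n T)
      (∑ S : Finset (Fin n), MvPolynomial.monomial (md n S) (g S)) = g T := by
    rw [MvPolynomial.coeff_sum]
    rw [Finset.sum_eq_single T]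
    · simp [MvPolynomial.coeff_monomial]
    · intro S _ hS
      rw [MvPolynomial.coeff_monomial, if_neg (fun h => hS (md_injective h))]
    · simp
  have hmem : md n T ∈ (∑ S : Finset (Fin n), MvPolynomial.monomial (md n S) (g S)).support := by
    rw [MvPolynomial.mem_support_iff, hcoeff]; exact hT
  obtain ⟨i, hi⟩ := hg _ hmem
  exact md_not_bad T i hi

lemma bf_span : ⊤ ≤ Submodule.span k (Set.range (bf k n)) := by
  intro y _
  obtain ⟨p, rfl⟩ := Ideal.Quotient.mk_surjective y
  rw [← MvPolynomial.support_sum_monomial_coeff p, map_sum]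
  refine Submodule.sum_mem _ ?_
  intro d _
  by_cases hbad : ∃ i, 2 ≤ d i
  · have : MvPolynomial.monomial d (MvPolynomial.coeff d p) ∈ Q9 k n := by
      rw [mem_Q9_iff]
      intro e he
      have := MvPolynomial.support_monomial_subset he
      rw [Finset.mem_singleton] at this
      subst this; exact hbad
    rw [Ideal.Quotient.eq_zero_iff_mem.mpr this]
    exact Submodule.zero_mem _
  · push_neg at hbad
    have hd : d = md n d.support := by
      ext i
      rw [md_apply]
      by_cases h : i ∈ d.support
      · have h1 : d i ≠ 0 := Finsupp.mem_support_iff.mp h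
        have := hbad i
        rw [if_pos h]; omega
      · have h1 : d i = 0 := Finsupp.notMem_support_iff.mp h
        rw [if_neg h, h1]
    have : Ideal.Quotient.mk (Q9 k n) (MvPolynomial.monomial d (MvPolynomial.coeff d p))
        = MvPolynomial.coeff d p • bf k n d.support := by
      rw [smul_bf, ← hd]
    rw [this]
    exact Submodule.smul_mem _ _ (Submodule.subset_span ⟨d.support, rfl⟩)

variable (n) in
noncomputable def bR : Module.Basis (Finset (Fin n)) k (Ring9 k n) :=
  Module.Basis.mk (bf_linearIndependent k) (bf_span k)

lemma bR_eq : ⇑(bR k n) = bf k n := funext fun S => Module.Basis.mk_apply _ _ S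


lemma bf_mul (S T : Finset (Fin n)) :
    bf k n S * bf k n T = if Disjoint S T then bf k n (S ∪ T) else 0 := by
  rw [bf, bf, ← map_mul, MvPolynomial.monomial_mul, one_mul]
  split
  · rw [md_add_disjoint ‹_›]; rfl
  · rw [Ideal.Quotient.eq_zero_iff_mem, mem_Q9_iff]
    intro d hd
    have hde := MvPolynomial.support_monomial_subset hd
    rw [Finset.mem_singleton] at hde
    subst hde
    obtain ⟨i, hiS, hiT⟩ := Finset.not_disjoint_iff.mp ‹¬ Disjoint S T›
    refine ⟨i, ?_⟩
    rw [Finsupp.add_apply, md_apply, md_apply, if_pos hiS, if_pos hiT]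

lemma bf_mul_disjoint {S T : Finset (Fin n)} (h : Disjoint S T) :
    bf k n S * bf k n T = bf k n (S ∪ T) := by rw [bf_mul, if_pos h]

lemma bf_mul_nondisjoint {S T : Finset (Fin n)} (h : ¬ Disjoint S T) :
    bf k n S * bf k n T = 0 := by rw [bf_mul, if_neg h]

lemma bf_empty : bf k n ∅ = 1 := by
  rw [bf, md_empty]
  rw [MvPolynomial.monomial_zero', MvPolynomial.C_1, map_one]

lemma x9_eq (i : Fin n) : x9 k n i = bf k n {i} := by
  rw [bf, md_singleton]
  rfl

lemma bf_ne_zero (S : Finset (Fin n)) : bf k n S ≠ 0 := by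
  rw [← bR_eq]; exact (bR k n).ne_zero S

lemma mem_span_bf_iff (s : Set (Finset (Fin n))) (z : Ring9 k n) :
    z ∈ Submodule.span k (bf k n '' s) ↔ ∀ S ∉ s, (bR k n).repr z S = 0 := by
  rw [← bR_eq, Module.Basis.mem_span_image]
  constructor
  · intro h S hS
    by_contra h0
    exact hS (h (Finsupp.mem_support_iff.mpr h0))
  · intro h d hd
    by_contra hds
    exact (Finsupp.mem_support_iff.mp (Finset.mem_coe.mp hd)) (h d hds)

lemma mul_bf_mem (s : Set (Finset (Fin n))) (hs : ∀ T S, S ∈ s → T ∪ S ∈ s)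
    (r : Ring9 k n) (S : Finset (Fin n)) (hS : S ∈ s) :
    r * bf k n S ∈ Submodule.span k (bf k n '' s) := by
  have hr : r * bf k n S
      = ∑ T : Finset (Fin n), (bR k n).repr r T • (bR k n T * bf k n S) := by
    conv_lhs => rw [← Module.Basis.sum_repr (bR k n) r]
    rw [Finset.sum_mul]
    exact Finset.sum_congr rfl fun T _ => smul_mul_assoc _ _ _
  rw [hr]
  refine Submodule.sum_mem _ fun T _ => ?_
  rw [bR_eq, bf_mul]
  refine Submodule.smul_mem _ _ ?_
  split
  · exact Submodule.subset_span ⟨T ∪ S, hs T S hS, rfl⟩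
  · exact Submodule.zero_mem _

lemma mul_mem_span (s : Set (Finset (Fin n))) (hs : ∀ T S, S ∈ s → T ∪ S ∈ s)
    (r y : Ring9 k n) (hy : y ∈ Submodule.span k (bf k n '' s)) :
    r * y ∈ Submodule.span k (bf k n '' s) := by
  refine Submodule.span_induction ?_ ?_ ?_ ?_ hy
  · rintro z ⟨S, hS, rfl⟩
    exact mul_bf_mem k s hs r S hS
  · rw [mul_zero]; exact Submodule.zero_mem _
  · intro a b _ _ ha hb
    rw [mul_add]; exact Submodule.add_mem _ ha hb
  · intro c z _ hz
    rw [mul_smul_comm]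
    exact Submodule.smul_mem _ _ hz

lemma ideal_span_eq (G : Set (Ring9 k n)) (s : Set (Finset (Fin n)))
    (hs : ∀ T S, S ∈ s → T ∪ S ∈ s)
    (hG1 : G ⊆ (Submodule.span k (bf k n '' s) : Set (Ring9 k n)))
    (hG2 : ∀ S ∈ s, bf k n S ∈ Ideal.span G) :
    Submodule.restrictScalars k (Ideal.span G) = Submodule.span k (bf k n '' s) := by
  apply le_antisymm
  · intro z hz
    rw [Submodule.restrictScalars_mem] at hz
    refine Submodule.span_induction (fun g hg => hG1 hg) (Submodule.zero_mem _)
      (fun a b _ _ ha hb => Submodule.add_mem _ ha hb) ?_ hz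
    intro r y _ hmem
    rw [smul_eq_mul]
    exact mul_mem_span k s hs r y hmem
  · rw [Submodule.span_le]
    rintro z ⟨S, hS, rfl⟩
    exact hG2 S hS

variable (n) in
noncomputable abbrev m9 : Ideal (Ring9 k n) := Ideal.span (Set.range (x9 k n))

lemma m9_eq : Submodule.restrictScalars k (m9 k n)
    = Submodule.span k (bf k n '' {S : Finset (Fin n) | S.Nonempty}) := by
  refine ideal_span_eq k _ _ ?_ ?_ ?_
  · intro T S hS
    exact hS.mono Finset.subset_union_right
  · rintro z ⟨i, rfl⟩
    rw [x9_eq]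
    exact Submodule.subset_span ⟨{i}, Finset.singleton_nonempty i, rfl⟩
  · rintro S ⟨i, hi⟩
    have hdisj : Disjoint ({i} : Finset (Fin n)) (S.erase i) := by simp
    have key : bf k n S = x9 k n i * bf k n (S.erase i) := by
      rw [x9_eq, bf_mul_disjoint k hdisj, ← Finset.insert_eq, Finset.insert_erase hi]
    rw [key]
    exact Ideal.mul_mem_right _ _ (Ideal.subset_span ⟨i, rfl⟩)

lemma I9_eq : Submodule.restrictScalars k (I9 k n)
    = Submodule.span k (bf k n '' {S : Finset (Fin n) | 2 ≤ S.card}) := by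
  refine ideal_span_eq k _ _ ?_ ?_ ?_
  · intro T S hS
    exact le_trans hS (Finset.card_le_card Finset.subset_union_right)
  · rintro z ⟨i, j, hij, rfl⟩
    have hd : Disjoint ({i} : Finset (Fin n)) ({j} : Finset (Fin n)) := by
      simp [Finset.disjoint_singleton, hij.ne, hij.ne']
    rw [x9_eq, x9_eq, bf_mul_disjoint k hd]
    refine Submodule.subset_span ⟨{i} ∪ {j}, ?_, rfl⟩
    have : 2 ≤ ({i, j} : Finset (Fin n)).card := by
      rw [Finset.card_insert_of_notMem (by simp [hij.ne]), Finset.card_singleton]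
    exact this
  · rintro S hS
    obtain ⟨i, hi, j, hj, hij⟩ := Finset.one_lt_card.mp hS
    have main : ∀ a b : Fin n, a ∈ S → b ∈ S → a < b →
        bf k n S ∈ Ideal.span {p : Ring9 k n | ∃ i j : Fin n, i < j ∧ p = x9 k n i * x9 k n j} := by
      intro a b ha hb hab
      have hsub : ({a} ∪ {b} : Finset (Fin n)) ⊆ S := by
        intro c hc
        rcases Finset.mem_union.mp hc with h | h <;> simp_all
      have hd1 : Disjoint ({a} : Finset (Fin n)) ({b} : Finset (Fin n)) := by
        simp [Finset.disjoint_singleton, hab.ne, hab.ne']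
      have hd2 : Disjoint ({a} ∪ {b} : Finset (Fin n)) (S \ ({a} ∪ {b})) :=
        Finset.disjoint_sdiff
      have key : bf k n S = (x9 k n a * x9 k n b) * bf k n (S \ ({a} ∪ {b})) := by
        rw [x9_eq, x9_eq, bf_mul_disjoint k hd1, bf_mul_disjoint k hd2,
          Finset.union_sdiff_of_subset hsub]
      rw [key]
      exact Ideal.mul_mem_right _ _ (Ideal.subset_span ⟨a, b, hab, rfl⟩)
    rcases hij.lt_or_gt with h | h
    · exact main i j hi hj h
    · exact main j i hj hi h


variable (n) in
/-- The annihilator of the ideal `a` inside the module `N`. -/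
noncomputable def annsub (a : Ideal (Ring9 k n)) (N : Type u) [AddCommGroup N]
    [Module (Ring9 k n) N] : Submodule (Ring9 k n) N where
  carrier := {y | ∀ z ∈ a, z • y = 0}
  add_mem' := by
    intro y z hy hz w hw
    rw [smul_add, hy w hw, hz w hw, add_zero]
  zero_mem' := by
    intro w hw
    rw [smul_zero]
  smul_mem' := by
    intro r y hy w hw
    rw [smul_comm, hy w hw, smul_zero]

lemma mem_annsub {a : Ideal (Ring9 k n)} {N : Type u} [AddCommGroup N]
    [Module (Ring9 k n) N] {y : N} :
    y ∈ annsub k n a N ↔ ∀ z ∈ a, z • y = 0 := Iff.rfl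

lemma smul_one_quot (a : Ideal (Ring9 k n)) (r : Ring9 k n) :
    r • (1 : Ring9 k n ⧸ a) = Ideal.Quotient.mk a r := by
  have h : (1 : Ring9 k n ⧸ a) = Submodule.Quotient.mk (1 : Ring9 k n) := rfl
  rw [h, ← Submodule.Quotient.mk_smul, smul_eq_mul, mul_one]
  rfl

variable (n) in
/-- `Hom_R(R/a, N)` is the annihilator of `a` in `N`. -/
noncomputable def homEquivAnn (a : Ideal (Ring9 k n)) (N : Type u) [AddCommGroup N]
    [Module (Ring9 k n) N] :
    ((Ring9 k n ⧸ a) →ₗ[Ring9 k n] N) ≃ₗ[Ring9 k n] annsub k n a N where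
  toFun φ := ⟨φ 1, by
    intro z hz
    rw [← map_smul, smul_one_quot, Ideal.Quotient.eq_zero_iff_mem.mpr hz, map_zero]⟩
  map_add' φ ψ := rfl
  map_smul' r φ := rfl
  invFun y := Submodule.liftQ a (LinearMap.toSpanSingleton _ _ y.1) (by
    intro z hz
    rw [LinearMap.mem_ker, LinearMap.toSpanSingleton_apply]
    exact y.2 z hz)
  left_inv φ := by
    apply LinearMap.ext
    intro q
    obtain ⟨r, rfl⟩ := Submodule.Quotient.mk_surjective a q
    rw [Submodule.liftQ_apply, LinearMap.toSpanSingleton_apply, ← map_smul, smul_one_quot]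
    rfl
  right_inv y := by
    apply Subtype.ext
    show Submodule.liftQ a (LinearMap.toSpanSingleton _ _ y.1) _ 1 = y.1
    have h : (1 : Ring9 k n ⧸ a) = Submodule.Quotient.mk (1 : Ring9 k n) := rfl
    rw [h, Submodule.liftQ_apply, LinearMap.toSpanSingleton_apply, one_smul]

lemma mem_annsub_m9 {N : Type u} [AddCommGroup N] [Module (Ring9 k n) N] (y : N) :
    y ∈ annsub k n (m9 k n) N ↔ ∀ i, x9 k n i • y = 0 := by
  constructor
  · intro h i
    exact h _ (Ideal.subset_span ⟨i, rfl⟩)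
  · intro h z hz
    refine Submodule.span_induction ?_ ?_ ?_ ?_ hz
    · rintro w ⟨i, rfl⟩
      exact h i
    · exact zero_smul (Ring9 k n) y
    · intro u v _ _ hu hv
      rw [add_smul, hu, hv, add_zero]
    · intro r w _ hw
      rw [smul_eq_mul, mul_smul, hw, smul_zero]

lemma repr_bf_mul (U : Finset (Fin n)) (r : Ring9 k n) (T : Finset (Fin n))
    (hUT : Disjoint U T) :
    (bR k n).repr (bf k n U * r) (U ∪ T) = (bR k n).repr r T := by
  have hr : bf k n U * r
      = ∑ S : Finset (Fin n), (bR k n).repr r S • (bf k n U * bR k n S) := by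
    conv_lhs => rw [← Module.Basis.sum_repr (bR k n) r, Finset.mul_sum]
    exact Finset.sum_congr rfl fun S _ => mul_smul_comm _ _ _
  rw [← Module.Basis.coord_apply, hr, map_sum]
  rw [Finset.sum_eq_single T]
  · rw [map_smul, bR_eq, bf_mul, if_pos hUT, ← bR_eq, Module.Basis.coord_apply,
      Module.Basis.repr_self, Finsupp.single_eq_same, smul_eq_mul, mul_one]
  · intro S _ hS
    rw [map_smul, bR_eq, bf_mul]
    split
    · next hUS =>
      have hne : U ∪ S ≠ U ∪ T := by
        intro h
        apply hS
        have h2 := congrArg (fun W => W \ U) h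
        simpa [Finset.union_sdiff_cancel_left hUS,
          Finset.union_sdiff_cancel_left hUT] using h2
      rw [← bR_eq, Module.Basis.coord_apply, Module.Basis.repr_self,
        Finsupp.single_eq_of_ne hne.symm, smul_zero]
    · rw [map_zero, smul_zero]
  · intro h
    exact absurd (Finset.mem_univ T) h



variable (n) in
/-- k-linear version of `homEquivAnn`. -/
noncomputable def homEquivAnnK (a : Ideal (Ring9 k n)) (N : Type u) [AddCommGroup N]
    [Module (Ring9 k n) N] [Module k N] [IsScalarTower k (Ring9 k n) N] :
    ((Ring9 k n ⧸ a) →ₗ[Ring9 k n] N) ≃ₗ[k] annsub k n a N where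
  toFun φ := (homEquivAnn k n a N) φ
  map_add' φ ψ := rfl
  map_smul' c φ := rfl
  invFun y := (homEquivAnn k n a N).symm y
  left_inv φ := (homEquivAnn k n a N).left_inv φ
  right_inv y := (homEquivAnn k n a N).right_inv y

variable (n) in
/-- transfer between an `R`-submodule and a `k`-submodule with the same carrier -/
noncomputable def subEquiv {N : Type u} [AddCommGroup N] [Module (Ring9 k n) N] [Module k N]
    [IsScalarTower k (Ring9 k n) N]
    (p : Submodule (Ring9 k n) N) (q : Submodule k N)
    (h : Submodule.restrictScalars k p = q) : p ≃ₗ[k] q where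
  toFun y := ⟨y.1, by
    have hy : y.1 ∈ Submodule.restrictScalars k p := y.2
    rw [h] at hy
    exact hy⟩
  map_add' _ _ := rfl
  map_smul' _ _ := rfl
  invFun z := ⟨z.1, by
    have hz : z.1 ∈ Submodule.restrictScalars k p := by
      rw [h]
      exact z.2
    exact hz⟩
  left_inv y := rfl
  right_inv z := rfl

lemma x9_smul_mkM (i : Fin n) (z : Ring9 k n) :
    x9 k n i • (Submodule.Quotient.mk z : M9 k n)
      = Submodule.Quotient.mk (x9 k n i * z) := by
  rw [← Submodule.Quotient.mk_smul, smul_eq_mul]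

lemma mk_bf_card_two {S : Finset (Fin n)} (hS : 2 ≤ S.card) :
    (Submodule.Quotient.mk (bf k n S) : M9 k n) = 0 := by
  rw [Submodule.Quotient.mk_eq_zero]
  rw [← Submodule.restrictScalars_mem k, I9_eq]
  exact Submodule.subset_span ⟨S, hS, rfl⟩

lemma socM_eq (hn : 2 ≤ n) :
    Submodule.restrictScalars k (annsub k n (m9 k n) (M9 k n))
      = Submodule.span k (Set.range fun i : Fin n =>
          (Submodule.Quotient.mk (bf k n {i}) : M9 k n)) := by
  apply le_antisymm
  · intro y hy
    rw [Submodule.restrictScalars_mem, mem_annsub_m9] at hy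
    obtain ⟨r, rfl⟩ := Submodule.Quotient.mk_surjective (I9 k n) y
    let i0 : Fin n := ⟨0, by omega⟩
    have h0 : (bR k n).repr r ∅ = 0 := by
      have hz := hy i0
      rw [x9_smul_mkM, x9_eq, Submodule.Quotient.mk_eq_zero,
        ← Submodule.restrictScalars_mem k, I9_eq] at hz
      have h1 := (mem_span_bf_iff k _ _).mp hz {i0} (by simp)
      have h2 := repr_bf_mul k {i0} r ∅ (Finset.disjoint_empty_right _)
      rw [Finset.union_empty] at h2
      rw [← h2]
      exact h1
    have hy2 : (Submodule.Quotient.mk r : M9 k n)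
        = ∑ S : Finset (Fin n), (bR k n).repr r S •
            (Submodule.Quotient.mk (bf k n S) : M9 k n) := by
      conv_lhs => rw [← Module.Basis.sum_repr (bR k n) r]
      rw [show (Submodule.Quotient.mk (∑ S : Finset (Fin n),
          (bR k n).repr r S • bR k n S) : M9 k n)
          = (I9 k n).mkQ (∑ S : Finset (Fin n), (bR k n).repr r S • bR k n S) from rfl,
        map_sum]
      refine Finset.sum_congr rfl fun S _ => ?_
      rw [Submodule.mkQ_apply, Submodule.Quotient.mk_smul, bR_eq]
    rw [hy2]
    refine Submodule.sum_mem _ fun S _ => ?_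
    by_cases hS0 : S = ∅
    · subst hS0
      rw [h0, zero_smul]
      exact Submodule.zero_mem _
    by_cases hS1 : S.card = 1
    · obtain ⟨i, rfl⟩ := Finset.card_eq_one.mp hS1
      exact Submodule.smul_mem _ _ (Submodule.subset_span ⟨i, rfl⟩)
    · have h2 : 2 ≤ S.card := by
        have := Finset.card_pos.mpr (Finset.nonempty_iff_ne_empty.mpr hS0)
        omega
      rw [mk_bf_card_two k h2, smul_zero]
      exact Submodule.zero_mem _
  · rw [Submodule.span_le]
    rintro z ⟨i, rfl⟩
    rw [SetLike.mem_coe, Submodule.restrictScalars_mem, mem_annsub_m9]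
    intro j
    rw [x9_smul_mkM, x9_eq]
    by_cases hij : j = i
    · subst hij
      rw [bf_mul_nondisjoint k (by simp), Submodule.Quotient.mk_eq_zero]
      exact Submodule.zero_mem _
    · have hd : Disjoint ({j} : Finset (Fin n)) ({i} : Finset (Fin n)) := by
        simp [Finset.disjoint_singleton, hij, Ne.symm hij]
      rw [bf_mul_disjoint k hd]
      exact mk_bf_card_two k (by
        rw [← Finset.insert_eq, Finset.card_insert_of_notMem (by simp [hij]),
          Finset.card_singleton])

lemma socM_li : LinearIndependent k (fun i : Fin n =>
    (Submodule.Quotient.mk (bf k n {i}) : M9 k n)) := by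
  rw [Fintype.linearIndependent_iff]
  intro g hg j
  have hsum : (Submodule.Quotient.mk (∑ i : Fin n, g i • bf k n {i}) : M9 k n) = 0 := by
    rw [show (Submodule.Quotient.mk (∑ i : Fin n, g i • bf k n {i}) : M9 k n)
        = (I9 k n).mkQ (∑ i : Fin n, g i • bf k n {i}) from rfl, map_sum, ← hg]
    refine Finset.sum_congr rfl fun i _ => ?_
    rw [Submodule.mkQ_apply, Submodule.Quotient.mk_smul]
  rw [Submodule.Quotient.mk_eq_zero, ← Submodule.restrictScalars_mem k, I9_eq] at hsum
  have h1 := (mem_span_bf_iff k _ _).mp hsum {j} (by simp)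
  have hco : (bR k n).repr (∑ i : Fin n, g i • bf k n {i}) {j} = g j := by
    rw [← Module.Basis.coord_apply, map_sum, Finset.sum_eq_single j]
    · rw [map_smul, Module.Basis.coord_apply, ← bR_eq, Module.Basis.repr_self,
        Finsupp.single_eq_same, smul_eq_mul, mul_one]
    · intro i _ hij
      have hne : ({i} : Finset (Fin n)) ≠ {j} := by
        simp [Finset.singleton_injective.ne_iff, hij]
      rw [map_smul, Module.Basis.coord_apply, ← bR_eq, Module.Basis.repr_self,
        Finsupp.single_eq_of_ne hne.symm, smul_zero]
    · intro h
      exact absurd (Finset.mem_univ j) h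
  rw [hco] at h1
  exact h1

lemma socR_eq :
    Submodule.restrictScalars k (annsub k n (m9 k n) (Ring9 k n))
      = Submodule.span k (bf k n '' {(Finset.univ : Finset (Fin n))}) := by
  apply le_antisymm
  · intro y hy
    rw [Submodule.restrictScalars_mem, mem_annsub_m9] at hy
    rw [mem_span_bf_iff]
    intro S hS
    have hSne : S ≠ Finset.univ := by simpa using hS
    obtain ⟨i, hi⟩ : ∃ i, i ∉ S := by
      by_contra h
      push_neg at h
      exact hSne (Finset.eq_univ_iff_forall.mpr h)
    have hz := hy i
    rw [smul_eq_mul, x9_eq] at hz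
    have h2 := repr_bf_mul k {i} y S (by simp [Finset.disjoint_singleton, hi])
    rw [hz, map_zero, Finsupp.coe_zero, Pi.zero_apply] at h2
    exact h2.symm
  · rw [Submodule.span_le]
    rintro z ⟨S, hS, rfl⟩
    rw [Set.mem_singleton_iff] at hS
    subst hS
    rw [SetLike.mem_coe, Submodule.restrictScalars_mem, mem_annsub_m9]
    intro i
    rw [smul_eq_mul, x9_eq, bf_mul_nondisjoint k (by simp [Finset.disjoint_singleton])]


variable (n) in
noncomputable def hset : Option (Fin n) → Finset (Fin n) :=
  fun o => o.elim Finset.univ (fun i => Finset.univ.erase i)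

lemma card_hset (hn : 2 ≤ n) (o : Option (Fin n)) :
    (hset n o).card = if o = none then n else n - 1 := by
  cases o with
  | none => simp [hset]
  | some i =>
    simp only [hset, Option.elim]
    rw [Finset.card_erase_of_mem (Finset.mem_univ i)]
    simp

lemma hset_injective (hn : 2 ≤ n) : Function.Injective (hset n) := by
  intro o1 o2 h
  have hcard := congrArg Finset.card h
  rw [card_hset hn, card_hset hn] at hcard
  cases o1 with
  | none =>
    cases o2 with
    | none => rfl
    | some j => simp at hcard; omega
  | some i =>
    cases o2 with
    | none => simp at hcard; omega
    | some j =>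
      simp only [hset, Option.elim] at h
      congr 1
      by_contra hij
      have : i ∈ Finset.univ.erase j := Finset.mem_erase.mpr ⟨hij, Finset.mem_univ i⟩
      rw [← h] at this
      exact (Finset.mem_erase.mp this).1 rfl

variable (n) in
noncomputable abbrev J9 : Submodule (Ring9 k n) (Ring9 k n) :=
  annsub k n (I9 k n) (Ring9 k n)

lemma bf_card_two_mem_I9 {S : Finset (Fin n)} (hS : 2 ≤ S.card) :
    bf k n S ∈ I9 k n := by
  rw [← Submodule.restrictScalars_mem k, I9_eq]
  exact Submodule.subset_span ⟨S, hS, rfl⟩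

lemma bf_hset_mem_J9 (hn : 2 ≤ n) (o : Option (Fin n)) :
    bf k n (hset n o) ∈ J9 k n := by
  intro z hz
  rw [← Submodule.restrictScalars_mem k, I9_eq] at hz
  rw [smul_eq_mul]
  refine Submodule.span_induction ?_ ?_ ?_ ?_ hz
  · rintro w ⟨T, hT, rfl⟩
    refine bf_mul_nondisjoint k fun hd => ?_
    have hcard := Finset.card_union_of_disjoint hd
    have hle : (T ∪ hset n o).card ≤ n := by
      have := Finset.card_le_univ (T ∪ hset n o)
      simpa using this
    have := card_hset hn o
    rcases o with _ | i <;> simp_all <;> omega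
  · rw [zero_mul]
  · intro a b _ _ ha hb
    rw [add_mul, ha, hb, add_zero]
  · intro c z _ hz2
    rw [smul_mul_assoc, hz2, smul_zero]

lemma J9_eq (hn : 2 ≤ n) :
    Submodule.restrictScalars k (J9 k n)
      = Submodule.span k (Set.range fun o : Option (Fin n) => bf k n (hset n o)) := by
  have himg : (Set.range fun o : Option (Fin n) => bf k n (hset n o))
      = bf k n '' (Set.range (hset n)) := by
    rw [← Set.range_comp]
    rfl
  apply le_antisymm
  · intro y hy
    rw [Submodule.restrictScalars_mem] at hy
    rw [himg, mem_span_bf_iff]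
    intro S hS
    -- S not in range hset : complement has at least 2 elements
    have h2 : 2 ≤ (Finset.univ \ S).card := by
      by_contra hlt
      push_neg at hlt
      interval_cases h : (Finset.univ \ S).card
      · apply hS
        refine ⟨none, ?_⟩
        have : S = Finset.univ := by
          have := Finset.card_eq_zero.mp h
          have hsub : Finset.univ ⊆ S := by
            intro a _
            by_contra ha
            have : a ∈ Finset.univ \ S := Finset.mem_sdiff.mpr ⟨Finset.mem_univ a, ha⟩
            simp_all
          exact (Finset.eq_univ_of_forall fun a => hsub (Finset.mem_univ a))
        simp [hset, this]
      · obtain ⟨i, hi⟩ := Finset.card_eq_one.mp h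
        apply hS
        refine ⟨some i, ?_⟩
        have hiS : i ∉ S := by
          have : i ∈ Finset.univ \ S := hi ▸ Finset.mem_singleton_self i
          exact (Finset.mem_sdiff.mp this).2
        have : S = Finset.univ.erase i := by
          ext a
          rw [Finset.mem_erase]
          constructor
          · intro ha
            exact ⟨fun h' => hiS (h' ▸ ha), Finset.mem_univ a⟩
          · rintro ⟨hane, -⟩
            by_contra haS
            have : a ∈ Finset.univ \ S := Finset.mem_sdiff.mpr ⟨Finset.mem_univ a, haS⟩
            rw [hi, Finset.mem_singleton] at this
            exact hane this
        simp [hset, this]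
    obtain ⟨i, hi, j, hj, hij⟩ := Finset.one_lt_card.mp h2
    have hiS : i ∉ S := (Finset.mem_sdiff.mp hi).2
    have hjS : j ∉ S := (Finset.mem_sdiff.mp hj).2
    have hd1 : Disjoint ({i} : Finset (Fin n)) ({j} : Finset (Fin n)) := by
      simp [Finset.disjoint_singleton, hij, Ne.symm hij]
    have hcard2 : 2 ≤ ({i} ∪ {j} : Finset (Fin n)).card := by
      rw [← Finset.insert_eq, Finset.card_insert_of_notMem (by simp [hij]),
        Finset.card_singleton]
    have hz : bf k n ({i} ∪ {j}) • y = 0 := hy _ (bf_card_two_mem_I9 k hcard2)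
    rw [smul_eq_mul] at hz
    have hd2 : Disjoint ({i} ∪ {j} : Finset (Fin n)) S := by
      rw [Finset.disjoint_left]
      intro a ha
      rcases Finset.mem_union.mp ha with h | h <;>
        rw [Finset.mem_singleton] at h <;> subst h <;> assumption
    have h3 := repr_bf_mul k ({i} ∪ {j}) y S hd2
    rw [hz, map_zero, Finsupp.coe_zero, Pi.zero_apply] at h3
    exact h3.symm
  · rw [Submodule.span_le]
    rintro z ⟨o, rfl⟩
    exact bf_hset_mem_J9 k hn o

lemma J9_li (hn : 2 ≤ n) :
    LinearIndependent k (fun o : Option (Fin n) => bf k n (hset n o)) := by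
  have : (fun o : Option (Fin n) => bf k n (hset n o)) = ⇑(bR k n) ∘ hset n := by
    funext o
    rw [Function.comp_apply, bR_eq]
  rw [this]
  exact (bR k n).linearIndependent.comp (hset n) (hset_injective hn)


lemma bf_univ_mem_J9 : bf k n Finset.univ ∈ J9 k n := by
  intro z hz
  rw [← Submodule.restrictScalars_mem k, I9_eq] at hz
  rw [smul_eq_mul]
  refine Submodule.span_induction ?_ ?_ ?_ ?_ hz
  · rintro w ⟨T, hT, rfl⟩
    refine bf_mul_nondisjoint k fun hd => ?_
    have hT' : 2 ≤ T.card := hT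
    obtain ⟨t, ht⟩ := Finset.card_pos.mp (by omega : 0 < T.card)
    exact (Finset.disjoint_left.mp hd ht) (Finset.mem_univ t)
  · rw [zero_mul]
  · intro a b _ _ ha hb
    rw [add_mul, ha, hb, add_zero]
  · intro c w _ h
    rw [smul_mul_assoc, h, smul_zero]

variable (n) in
noncomputable def juniv : J9 k n := ⟨bf k n Finset.univ, bf_univ_mem_J9 k⟩

lemma bfT_mul_J9_mem (T : Finset (Fin n)) (hT : T.Nonempty) (v : Ring9 k n)
    (hv : v ∈ Submodule.span k (Set.range fun o : Option (Fin n) => bf k n (hset n o))) :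
    bf k n T * v ∈ Submodule.span k {bf k n Finset.univ} := by
  refine Submodule.span_induction ?_ ?_ ?_ ?_ hv
  · rintro w ⟨o, rfl⟩
    by_cases hd : Disjoint T (hset n o)
    · cases o with
      | none =>
        exfalso
        obtain ⟨t, ht⟩ := hT
        exact (Finset.disjoint_left.mp hd ht) (Finset.mem_univ t)
      | some i =>
        have hTi : T = {i} := by
          rcases Finset.subset_singleton_iff.mp (fun t ht => by
            have : t ∉ (hset n (some i)) := Finset.disjoint_left.mp hd ht
            simp only [hset, Option.elim, Finset.mem_erase, Finset.mem_univ,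
              and_true, not_not] at this
            rw [Finset.mem_singleton]
            exact this) with h | h
          · exact absurd h (Finset.nonempty_iff_ne_empty.mp hT)
          · exact h
        subst hTi
        have : bf k n {i} * bf k n (hset n (some i)) = bf k n Finset.univ := by
          rw [bf_mul_disjoint k hd]
          congr 1
          show {i} ∪ Finset.univ.erase i = Finset.univ
          rw [← Finset.insert_eq, Finset.insert_erase (Finset.mem_univ i)]
        rw [this]
        exact Submodule.subset_span rfl
    · rw [bf_mul_nondisjoint k hd]
      exact Submodule.zero_mem _
  · rw [mul_zero]
    exact Submodule.zero_mem _
  · intro a b _ _ ha hb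
    rw [mul_add]
    exact Submodule.add_mem _ ha hb
  · intro c w _ h
    rw [mul_smul_comm]
    exact Submodule.smul_mem _ _ h

lemma m9_mul_J9_mem (hn : 2 ≤ n) (r v : Ring9 k n) (hr : r ∈ m9 k n) (hv : v ∈ J9 k n) :
    r * v ∈ Submodule.span k {bf k n Finset.univ} := by
  have hv' : v ∈ Submodule.span k (Set.range fun o : Option (Fin n) => bf k n (hset n o)) := by
    rw [← J9_eq k hn]
    exact hv
  have hr' : r ∈ Submodule.span k (bf k n '' {S : Finset (Fin n) | S.Nonempty}) := by
    rw [← m9_eq]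
    exact hr
  refine Submodule.span_induction ?_ ?_ ?_ ?_ hr'
  · rintro w ⟨T, hT, rfl⟩
    exact bfT_mul_J9_mem k T hT v hv'
  · rw [zero_mul]
    exact Submodule.zero_mem _
  · intro a b _ _ ha hb
    rw [add_mul]
    exact Submodule.add_mem _ ha hb
  · intro c w _ h
    rw [smul_mul_assoc]
    exact Submodule.smul_mem _ _ h

lemma W_eq (hn : 2 ≤ n) :
    Submodule.restrictScalars k (m9 k n • (⊤ : Submodule (Ring9 k n) (J9 k n)))
      = Submodule.span k {juniv k n} := by
  apply le_antisymm
  · intro w hw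
    rw [Submodule.restrictScalars_mem] at hw
    refine Submodule.smul_induction_on hw ?_ ?_
    · intro r hr m _
      have hm : r * (m : Ring9 k n) ∈ Submodule.span k {bf k n Finset.univ} :=
        m9_mul_J9_mem k hn r m.1 hr m.2
      obtain ⟨c, hc⟩ := Submodule.mem_span_singleton.mp hm
      refine Submodule.mem_span_singleton.mpr ⟨c, ?_⟩
      apply Subtype.ext
      show c • bf k n Finset.univ = ((r • m : J9 k n) : Ring9 k n)
      rw [hc]
      rfl
    · intro a b ha hb
      exact Submodule.add_mem _ ha hb
  · rw [Submodule.span_le, Set.singleton_subset_iff]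
    have h0 : (0 : ℕ) < n := by omega
    let i0 : Fin n := ⟨0, h0⟩
    have hmem : bf k n (Finset.univ.erase i0) ∈ J9 k n := by
      have := bf_hset_mem_J9 k hn (some i0)
      simpa [hset] using this
    have hj : juniv k n = x9 k n i0 • (⟨bf k n (Finset.univ.erase i0), hmem⟩ : J9 k n) := by
      apply Subtype.ext
      show bf k n Finset.univ = x9 k n i0 • bf k n (Finset.univ.erase i0)
      rw [smul_eq_mul, x9_eq, bf_mul_disjoint k (Finset.disjoint_left.mpr (by
        intro a ha
        rw [Finset.mem_singleton] at ha
        subst ha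
        simp)), ← Finset.insert_eq, Finset.insert_erase (Finset.mem_univ i0)]
    rw [SetLike.mem_coe, Submodule.restrictScalars_mem, hj]
    exact Submodule.smul_mem_smul (Ideal.subset_span ⟨i0, rfl⟩) Submodule.mem_top

lemma fin_ring9 : FiniteDimensional k (Ring9 k n) := Module.Finite.of_basis (bR k n)

lemma juniv_ne_zero : juniv k n ≠ 0 := by
  intro h
  exact bf_ne_zero k Finset.univ (congrArg Subtype.val h)

lemma finrank_J9 (hn : 2 ≤ n) : Module.finrank k (J9 k n) = n + 1 := by
  haveI := fin_ring9 k (n := n)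
  rw [LinearEquiv.finrank_eq (subEquiv k n (J9 k n) _ (J9_eq k hn))]
  rw [finrank_span_eq_card (J9_li k hn)]
  simp

lemma finrank_W (hn : 2 ≤ n) :
    Module.finrank k ↥(m9 k n • (⊤ : Submodule (Ring9 k n) (J9 k n))) = 1 := by
  haveI := fin_ring9 k (n := n)
  rw [LinearEquiv.finrank_eq (subEquiv k n _ _ (W_eq k hn))]
  exact finrank_span_singleton (juniv_ne_zero k)

lemma finite_J9 (hn : 2 ≤ n) : Module.Finite k (J9 k n) := by
  haveI := fin_ring9 k (n := n)
  exact Module.Finite.equiv (subEquiv k n (J9 k n) _ (J9_eq k hn)).symm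

lemma finrank_quotJ9 (hn : 2 ≤ n) :
    Module.finrank k ((J9 k n) ⧸ (m9 k n • (⊤ : Submodule (Ring9 k n) (J9 k n)))) = n := by
  haveI := fin_ring9 k (n := n)
  haveI := finite_J9 k hn
  rw [Submodule.finrank_quotient, finrank_J9 k hn, finrank_W k hn]
  omega

lemma one_notin_I9 : (Submodule.Quotient.mk (bf k n ∅) : M9 k n) ≠ 0 := by
  rw [Ne, Submodule.Quotient.mk_eq_zero, ← Submodule.restrictScalars_mem k, I9_eq,
    mem_span_bf_iff]
  intro h
  have h2 := h ∅ (by simp)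
  have h3 : (bR k n).repr (bR k n ∅) ∅ = 0 := by
    rw [bR_eq]
    exact h2
  rw [Module.Basis.repr_self, Finsupp.single_eq_same] at h3
  exact one_ne_zero h3

lemma not_free (hn : 2 ≤ n) : ¬ Module.Free (Ring9 k n) (M9 k n) := by
  intro hfree
  haveI : Nontrivial (M9 k n) := ⟨_, 0, one_notin_I9 k⟩
  let b := Module.Free.chooseBasis (Ring9 k n) (M9 k n)
  obtain ⟨i⟩ := b.index_nonempty
  have h0 : (0 : ℕ) < n := by omega
  have h1 : (1 : ℕ) < n := by omega
  set ξ := x9 k n ⟨0, h0⟩ * x9 k n ⟨1, h1⟩ with hξ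
  have hξI : ξ ∈ I9 k n :=
    Ideal.subset_span ⟨⟨0, h0⟩, ⟨1, h1⟩, Fin.mk_lt_mk.mpr (by omega), rfl⟩
  have hkill : ξ • b i = 0 := by
    obtain ⟨z, hz⟩ := Submodule.Quotient.mk_surjective (I9 k n) (b i)
    rw [← hz, ← Submodule.Quotient.mk_smul, Submodule.Quotient.mk_eq_zero, smul_eq_mul]
    exact Ideal.mul_mem_right z _ hξI
  have hc := congrArg (fun w => b.repr w i) hkill
  simp only [map_smul, Module.Basis.repr_self, map_zero, Finsupp.coe_zero, Pi.zero_apply,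
    Finsupp.coe_smul, Pi.smul_apply, Finsupp.single_eq_same, smul_eq_mul, mul_one] at hc
  have hne : ξ ≠ 0 := by
    have hd : Disjoint ({(⟨0, h0⟩ : Fin n)} : Finset (Fin n)) {(⟨1, h1⟩ : Fin n)} := by
      simp [Finset.disjoint_singleton, Fin.ext_iff]
    rw [hξ, x9_eq, x9_eq, bf_mul_disjoint k hd]
    exact bf_ne_zero k _
  exact hne hc


lemma finrank_typeM (hn : 2 ≤ n) :
    Module.finrank k (K9 k n →ₗ[Ring9 k n] M9 k n) = n := by
  have e := (homEquivAnnK k n (m9 k n) (M9 k n)).trans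
    (subEquiv k n _ _ (socM_eq k hn))
  rw [e.finrank_eq, finrank_span_eq_card (socM_li k)]
  simp

lemma finrank_typeR (hn : 2 ≤ n) :
    Module.finrank k (K9 k n →ₗ[Ring9 k n] Ring9 k n) = 1 := by
  have hsoc := socR_eq k (n := n)
  rw [Set.image_singleton] at hsoc
  have e := (homEquivAnnK k n (m9 k n) (Ring9 k n)).trans
    (subEquiv k n _ _ hsoc)
  rw [e.finrank_eq]
  exact finrank_span_singleton (bf_ne_zero k _)

lemma finrank_mu (hn : 2 ≤ n) :
    Module.finrank k ((K9 k n) ⊗[Ring9 k n] (M9 k n →ₗ[Ring9 k n] Ring9 k n)) = n := by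
  have e1 : (M9 k n →ₗ[Ring9 k n] Ring9 k n) ≃ₗ[Ring9 k n] J9 k n :=
    homEquivAnn k n (I9 k n) (Ring9 k n)
  have e2 : (K9 k n) ⊗[Ring9 k n] (M9 k n →ₗ[Ring9 k n] Ring9 k n)
      ≃ₗ[Ring9 k n] (K9 k n) ⊗[Ring9 k n] (J9 k n) :=
    TensorProduct.congr (LinearEquiv.refl _ _) e1
  have e3 : (K9 k n) ⊗[Ring9 k n] (J9 k n)
      ≃ₗ[Ring9 k n] (J9 k n) ⧸ (m9 k n • (⊤ : Submodule (Ring9 k n) (J9 k n))) :=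
    TensorProduct.quotTensorEquivQuotSMul (J9 k n) (m9 k n)
  have E := (e2.trans e3).restrictScalars k
  rw [E.finrank_eq, finrank_quotJ9 k hn]

end Stmt9

/-- With `R = k[X_1,…,X_n]/(X_i^2)`, `I = (x_i x_j : i < j)` and
`M = R/I` (`n ≥ 2`): `M` is non-free, `type(M) = n`, `μ(Hom_R(M,R)) = n`, `type(R) = 1`,
and `type(M) = μ(Hom_R(M,R)) ⬝ type(R)`; here `type(L) = dim_k Hom_R(K, L)` and
`μ(L) = dim_k (K ⊗_R L)` where `K = R/m` is the residue field. -/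
theorem stmt_9 (k : Type u) [Field k] (n : ℕ) (hn : 2 ≤ n) :
    ¬ Module.Free (Ring9 k n) (M9 k n) ∧
    Module.finrank k (K9 k n →ₗ[Ring9 k n] M9 k n) = n ∧
    Module.finrank k ((K9 k n) ⊗[Ring9 k n] (M9 k n →ₗ[Ring9 k n] Ring9 k n)) = n ∧
    Module.finrank k (K9 k n →ₗ[Ring9 k n] Ring9 k n) = 1 ∧
    Module.finrank k (K9 k n →ₗ[Ring9 k n] M9 k n) =
      Module.finrank k ((K9 k n) ⊗[Ring9 k n] (M9 k n →ₗ[Ring9 k n] Ring9 k n)) *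
        Module.finrank k (K9 k n →ₗ[Ring9 k n] Ring9 k n) := by
  refine ⟨Stmt9.not_free k hn, Stmt9.finrank_typeM k hn, Stmt9.finrank_mu k hn,
    Stmt9.finrank_typeR k hn, ?_⟩
  rw [Stmt9.finrank_typeM k hn, Stmt9.finrank_mu k hn, Stmt9.finrank_typeR k hn, mul_one]
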